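/- Let 1/√3 < y₀ < 3/√19 and let the sequences (xᵢ), (yᵢ), (aᵢ), (bᵢ) be defined by the strip recursion. Then for every i ≥ 0 one has 0 < yᵢ < 1, and for every i ≥ 1 one has yᵢ < y_{i−1}/2. -/
import Mathlib


noncomputable section

/-- The denominator `Dᵢ = (aᵢ − x_{i−1})(1 + y_{i−1}) + (bᵢ − x_{i−1})(1 − y_{i−1})`. -/
def StripDenom (x y a b : ℕ → ℝ) (i : ℕ) : ℝ :=
  (a i - x (i - 1)) * (1 + y (i - 1)) + (b i - x (i - 1)) * (1 - y (i - 1))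

/-- The strip recursion: `x₀ = 0`, `a₁ = 1/(1 − y₀)`, `b₁ = 1/(1 + y₀)`, and for `i ≥ 1`:
`xᵢ = x_{i−1} + 2 − 2(aᵢ − bᵢ)y_{i−1}/Dᵢ`, `yᵢ = y_{i−1} − 4y_{i−1}/Dᵢ`,
`a_{i+1} = aᵢ + 2/(1 − yᵢ)`, `b_{i+1} = bᵢ + 2/(1 + yᵢ)`. -/
def StripRec (x y a b : ℕ → ℝ) : Prop :=
  x 0 = 0 ∧ a 1 = 1 / (1 - y 0) ∧ b 1 = 1 / (1 + y 0) ∧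
    ∀ i : ℕ, 1 ≤ i →
      x i = x (i - 1) + 2 - 2 * (a i - b i) * y (i - 1) / StripDenom x y a b i ∧
      y i = y (i - 1) - 4 * y (i - 1) / StripDenom x y a b i ∧
      a (i + 1) = a i + 2 / (1 - y i) ∧
      b (i + 1) = b i + 2 / (1 + y i)

/-- The key algebraic identity behind `D_{i+1} = D_i + 8 y_i² / (1 - y_i²)`. -/
lemma strip_key (e f yy D y' : ℝ) (hD : D = e*(1+yy)+f*(1-yy))
    (hy' : y' = yy - 4*yy/D) (h1 : (1:ℝ) - y' ≠ 0) (h2 : (1:ℝ) + y' ≠ 0) :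
    (e - (2 - 2*(e-f)*yy/D) + 2/(1-y'))*(1+y') + (f - (2 - 2*(e-f)*yy/D) + 2/(1+y'))*(1-y')
      = D + 8*y'^2/(1-y'^2) := by
  have step1 : (e - (2 - 2*(e-f)*yy/D) + 2/(1-y'))*(1+y')
      + (f - (2 - 2*(e-f)*yy/D) + 2/(1+y'))*(1-y')
      = D - 4 + (2*(1+y')/(1-y') + 2*(1-y')/(1+y')) := by
    rw [hy', hD]; ring
  have step2 : 2*(1+y')/(1-y') + 2*(1-y')/(1+y') = 4 + 8*y'^2/(1-y'^2) := by
    have hsq : (1:ℝ) - y'^2 = (1-y')*(1+y') := by ring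
    rw [hsq]
    field_simp
    ring
  rw [step1, step2]; ring

set_option maxHeartbeats 1000000 in
/-- For `1/√3 < y₀ < 3/√19`, all `yᵢ` lie in `(0,1)` and `yᵢ < y_{i−1}/2` for `i ≥ 1`. -/
theorem statement7 (x y a b : ℕ → ℝ)
    (hy0 : 1 / Real.sqrt 3 < y 0) (hy0' : y 0 < 3 / Real.sqrt 19)
    (hrec : StripRec x y a b) :
    (∀ i : ℕ, 0 < y i ∧ y i < 1) ∧
    (∀ i : ℕ, 1 ≤ i → y i < y (i - 1) / 2) := by
  obtain ⟨hx0, ha1, hb1, hstep⟩ := hrec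
  -- numeric facts about y 0
  have hs3 : (0:ℝ) < Real.sqrt 3 := Real.sqrt_pos.mpr (by norm_num)
  have hs19 : (0:ℝ) < Real.sqrt 19 := Real.sqrt_pos.mpr (by norm_num)
  have hs3sq : (Real.sqrt 3)^2 = 3 := Real.sq_sqrt (by norm_num)
  have hs19sq : (Real.sqrt 19)^2 = 19 := Real.sq_sqrt (by norm_num)
  have hy0pos : 0 < y 0 := lt_trans (by positivity) hy0
  have hy0sq_lb : 1/3 < (y 0)^2 := by
    have h1 : 1 < y 0 * Real.sqrt 3 := by
      rw [div_lt_iff₀ hs3] at hy0; linarith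
    nlinarith [sq_nonneg (y 0 * Real.sqrt 3 - 1)]
  have hy0sq_ub : (y 0)^2 < 9/19 := by
    have h1 : y 0 * Real.sqrt 19 < 3 := by
      rw [lt_div_iff₀ hs19] at hy0'; linarith
    nlinarith [mul_pos hy0pos hs19]
  -- the invariant
  set P : ℕ → Prop := fun i =>
    0 < y i ∧ (y i)^2 < 9/19 ∧ 4 < StripDenom x y a b (i+1) ∧
      StripDenom x y a b (i+1) ≤ 8 - 4 * (y i)^2 with hP
  have hPall : ∀ i, P i := by
    intro i
    induction i with
    | zero =>
      refine ⟨hy0pos, hy0sq_ub, ?_, ?_⟩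
      · have hD1 : StripDenom x y a b 1
            = (1/(1 - y 0)) * (1 + y 0) + (1/(1 + y 0)) * (1 - y 0) := by
          simp [StripDenom, hx0, ha1, hb1]
        have hne1 : (1:ℝ) - y 0 > 0 := by nlinarith
        have hne2 : (1:ℝ) + y 0 > 0 := by linarith
        rw [hD1]
        rw [div_mul_eq_mul_div, div_mul_eq_mul_div, div_add_div _ _ (ne_of_gt hne1) (ne_of_gt hne2),
          lt_div_iff₀ (by positivity)]
        nlinarith
      · have hD1 : StripDenom x y a b 1
            = (1/(1 - y 0)) * (1 + y 0) + (1/(1 + y 0)) * (1 - y 0) := by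
          simp [StripDenom, hx0, ha1, hb1]
        have hne1 : (1:ℝ) - y 0 > 0 := by nlinarith
        have hne2 : (1:ℝ) + y 0 > 0 := by linarith
        rw [hD1]
        rw [div_mul_eq_mul_div, div_mul_eq_mul_div, div_add_div _ _ (ne_of_gt hne1) (ne_of_gt hne2),
          div_le_iff₀ (by positivity)]
        nlinarith
    | succ i ih =>
      obtain ⟨hyi, hyisq, hDlt, hDle⟩ := ih
      set D := StripDenom x y a b (i+1) with hDdef
      have hDpos : 0 < D := by linarith
      have hDne : D ≠ 0 := ne_of_gt hDpos
      have hD8 : D < 8 := by nlinarith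
      obtain ⟨hxe, hye, hae, hbe⟩ := hstep (i+1) (by omega)
      simp only [Nat.add_sub_cancel] at hxe hye hae hbe
      -- bounds on y (i+1)
      have hy'pos : 0 < y (i+1) := by
        rw [hye]
        have : 4 * y i / D < y i := by
          rw [div_lt_iff₀ hDpos]; nlinarith
        linarith
      have hy'half : y (i+1) < y i / 2 := by
        rw [hye]
        have : y i / 2 < 4 * y i / D := by
          rw [lt_div_iff₀ hDpos]; nlinarith
        linarith
      have hyi_ub : y i < 7/10 := by nlinarith
      have hy'ub : y (i+1) < 7/20 := by linarith
      have hy'sq : (y (i+1))^2 < 9/19 := by nlinarith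
      have hne1 : (1:ℝ) - y (i+1) ≠ 0 := by nlinarith
      have hne2 : (1:ℝ) + y (i+1) ≠ 0 := by nlinarith
      -- the recursion for D
      have hDnext : StripDenom x y a b (i+2)
          = D + 8 * (y (i+1))^2 / (1 - (y (i+1))^2) := by
        have hDform : D = (a (i+1) - x i) * (1 + y i) + (b (i+1) - x i) * (1 - y i) := by
          simp [hDdef, StripDenom]
        have key := strip_key (a (i+1) - x i) (b (i+1) - x i) (y i) D (y (i+1))
          (by rw [hDform]) (by rw [hye]) hne1 hne2
        calc StripDenom x y a b (i+2)
            = (a (i+2) - x (i+1)) * (1 + y (i+1)) + (b (i+2) - x (i+1)) * (1 - y (i+1)) := by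
              simp [StripDenom]
          _ = ((a (i+1) - x i) - (2 - 2*((a (i+1) - x i) - (b (i+1) - x i))*(y i)/D)
                + 2/(1 - y (i+1))) * (1 + y (i+1))
              + ((b (i+1) - x i) - (2 - 2*((a (i+1) - x i) - (b (i+1) - x i))*(y i)/D)
                + 2/(1 + y (i+1))) * (1 - y (i+1)) := by
              rw [hae, hbe, hxe]; ring
          _ = D + 8 * (y (i+1))^2 / (1 - (y (i+1))^2) := key
      have hsqpos : (0:ℝ) < 1 - (y (i+1))^2 := by nlinarith
      have hy'sqb : (y (i+1))^2 < 49/400 := by nlinarith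
      have hincr : 8 * (y (i+1))^2 / (1 - (y (i+1))^2) ≤ 12 * (y (i+1))^2 := by
        rw [div_le_iff₀ hsqpos]
        nlinarith [sq_nonneg (y (i+1)), mul_le_mul_of_nonneg_left hy'sqb.le (sq_nonneg (y (i+1)))]
      refine ⟨hy'pos, hy'sq, ?_, ?_⟩
      · rw [hDnext]
        have : 0 ≤ 8 * (y (i+1))^2 / (1 - (y (i+1))^2) := by positivity
        linarith
      · rw [hDnext]
        nlinarith
  constructor
  · intro i
    obtain ⟨h1, h2, _, _⟩ := hPall i
    exact ⟨h1, by nlinarith⟩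
  · intro i hi
    obtain ⟨j, rfl⟩ : ∃ j, i = j + 1 := ⟨i - 1, by omega⟩
    obtain ⟨hyj, hyjsq, hDlt, hDle⟩ := hPall j
    set D := StripDenom x y a b (j+1) with hDdef
    have hDpos : 0 < D := by linarith
    have hD8 : D < 8 := by nlinarith
    obtain ⟨_, hye, _, _⟩ := hstep (j+1) (by omega)
    simp only [Nat.add_sub_cancel] at hye ⊢
    rw [hye]
    have : y j / 2 < 4 * y j / D := by
      rw [lt_div_iff₀ hDpos]; nlinarith
    linarith
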